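/- If N is an a-cofinite R-module, then Ass_R(N) = Ass_R(Hom_R(R/a, N)), and in particular Ass_R(N) is finite. -/

import Mathlib

open CategoryTheory

/-- An `R`-module `N` is `a`-cofinite if `Supp N ⊆ V(a)` and all the modules
`Ext^i_R(R/a, N)` are finitely generated. -/
def IsCofinite {R : Type} [CommRing R] (a : Ideal R)
    (N : Type) [AddCommGroup N] [Module R N] : Prop :=
  Module.support R N ⊆ PrimeSpectrum.zeroLocus (a : Set R) ∧
    ∀ i : ℕ, Module.Finite R
      (((Ext R (ModuleCat.{0} R) i).obj (Opposite.op (ModuleCat.of R (R ⧸ a)))).obj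
        (ModuleCat.of R N))

section AssocAux

variable {R : Type*} [CommRing R] {M : Type*} [AddCommGroup M] [Module R M]

/-- If `p` is an associated prime of `M` and `N ≤ M`, then `p` is an associated prime
of `N` or of `M ⧸ N`. -/
lemma isAssociatedPrime_or [IsNoetherianRing R] (N : Submodule R M) {p : Ideal R} (hp : IsAssociatedPrime p M) :
    IsAssociatedPrime p N ∨ IsAssociatedPrime p (M ⧸ N) := by
  obtain ⟨hprime, x, hx⟩ := isAssociatedPrime_iff.mp hp
  by_cases hc : ∃ r : R, r • x ∈ N ∧ r • x ≠ 0
  · obtain ⟨r, hrN, hr0⟩ := hc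
    left
    refine isAssociatedPrime_iff.mpr ⟨hprime, ⟨r • x, hrN⟩, ?_⟩
    ext s
    rw [Submodule.mem_colon_singleton, Submodule.mem_bot]
    constructor
    · intro hs
      have : s • x = 0 := by
        rw [hx, Submodule.mem_colon_singleton, Submodule.mem_bot] at hs; exact hs
      rw [Subtype.ext_iff]
      show s • (r • x) = 0
      rw [smul_comm, this, smul_zero]
    · intro hs
      have hs' : s • (r • x) = 0 := by
        rw [Subtype.ext_iff] at hs; exact hs
      rw [smul_smul] at hs'
      have : s * r ∈ p := by
        rw [hx, Submodule.mem_colon_singleton, Submodule.mem_bot]; exact hs'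
      rcases hprime.mem_or_mem this with h | h
      · exact h
      · exact absurd (by rw [hx, Submodule.mem_colon_singleton, Submodule.mem_bot] at h; exact h) hr0
  · push_neg at hc
    right
    refine isAssociatedPrime_iff.mpr ⟨hprime, Submodule.Quotient.mk x, ?_⟩
    ext s
    rw [Submodule.mem_colon_singleton, Submodule.mem_bot, ← Submodule.Quotient.mk_smul,
      Submodule.Quotient.mk_eq_zero]
    constructor
    · intro hs
      have : s • x = 0 := by
        rw [hx, Submodule.mem_colon_singleton, Submodule.mem_bot] at hs; exact hs
      rw [this]; exact N.zero_mem
    · intro hs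
      have : s • x = 0 := hc s hs
      rw [hx, Submodule.mem_colon_singleton, Submodule.mem_bot]; exact this

/-- Over a Noetherian ring, a Noetherian module has finitely many associated primes. -/
lemma associatedPrimes_finite_of_isNoetherian [IsNoetherianRing R] [IsNoetherian R M] :
    (associatedPrimes R M).Finite := by
  let S : Set (Submodule R M) := {N | (associatedPrimes R N).Finite}
  have hbot : (⊥ : Submodule R M) ∈ S := by
    have : (associatedPrimes R (⊥ : Submodule R M)) = ∅ :=
      associatedPrimes.eq_empty_of_subsingleton
    simp only [S, Set.mem_setOf_eq, this]
    exact Set.finite_empty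
  obtain ⟨N, hN, hmax⟩ := (set_has_maximal_iff_noetherian.mpr ‹IsNoetherian R M›) S ⟨⊥, hbot⟩
  by_cases hT : N = ⊤
  · subst hT
    have := LinearEquiv.AssociatedPrimes.eq (Submodule.topEquiv (R := R) (M := M))
    rw [← this]
    exact hN
  · exfalso
    have hntriv : Nontrivial (M ⧸ N) :=
      Submodule.Quotient.nontrivial_iff.mpr hT
    obtain ⟨p, hp⟩ := associatedPrimes.nonempty R (M ⧸ N)
    obtain ⟨hprime, y, hy⟩ := (isAssociatedPrime_iff (I := p) (M := M ⧸ N)).mp hp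
    obtain ⟨x, rfl⟩ := Submodule.Quotient.mk_surjective N y
    have hxN : x ∉ N := by
      intro hxN
      have : Submodule.Quotient.mk (p := N) x = 0 := (Submodule.Quotient.mk_eq_zero N).mpr hxN
      rw [this] at hy
      apply hprime.ne_top
      rw [hy, eq_top_iff]
      intro r _
      rw [Submodule.mem_colon_singleton, Submodule.mem_bot, smul_zero]
    set N' : Submodule R M := N ⊔ R ∙ x with hN'def
    have hNle : N ≤ N' := le_sup_left
    have hxN' : x ∈ N' := Submodule.mem_sup_right (Submodule.mem_span_singleton_self x)
    set N'' : Submodule R N' := N.comap N'.subtype with hN''def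
    -- the linear map `R → N' ⧸ N''`, `r ↦ r • x`
    set φ : R →ₗ[R] (N' ⧸ N'') :=
      (N''.mkQ).comp (LinearMap.toSpanSingleton R N' ⟨x, hxN'⟩) with hφdef
    have hφ_surj : Function.Surjective φ := by
      intro z
      obtain ⟨w, rfl⟩ := Submodule.Quotient.mk_surjective N'' z
      have hw2 : (w : M) ∈ N ⊔ R ∙ x := by rw [← hN'def]; exact w.2
      obtain ⟨n, hn, z', hz', hw⟩ := Submodule.mem_sup.mp hw2
      obtain ⟨c, rfl⟩ := Submodule.mem_span_singleton.mp hz'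
      refine ⟨c, ?_⟩
      have : Submodule.Quotient.mk (p := N'') (w - c • ⟨x, hxN'⟩) = 0 := by
        rw [Submodule.Quotient.mk_eq_zero]
        show (w : M) - c • x ∈ N
        have : (w : M) = n + c • x := hw.symm
        rw [this]; simpa using hn
      have h2 : Submodule.Quotient.mk (p := N'') w
          = Submodule.Quotient.mk (p := N'') (c • ⟨x, hxN'⟩) := by
        rwa [← sub_eq_zero, ← Submodule.Quotient.mk_sub]
      rw [h2]
      rfl
    have hker : LinearMap.ker φ = p := by
      ext r
      have : r ∈ LinearMap.ker φ ↔ r • x ∈ N := by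
        rw [LinearMap.mem_ker]
        show Submodule.Quotient.mk (p := N'') (r • ⟨x, hxN'⟩) = 0 ↔ _
        rw [Submodule.Quotient.mk_eq_zero]
        rfl
      rw [this, hy, Submodule.mem_colon_singleton, Submodule.mem_bot,
        ← Submodule.Quotient.mk_smul, Submodule.Quotient.mk_eq_zero]
    have hquot : associatedPrimes R (N' ⧸ N'') = {p} := by
      have e : (R ⧸ LinearMap.ker φ) ≃ₗ[R] (N' ⧸ N'') :=
        φ.quotKerEquivOfSurjective hφ_surj
      rw [← LinearEquiv.AssociatedPrimes.eq e, hker,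
        associatedPrimes.eq_singleton_of_isPrimary hprime.isPrimary, hprime.radical]
    have hfin' : (associatedPrimes R N').Finite := by
      have hsub : associatedPrimes R N' ⊆ associatedPrimes R N'' ∪ {p} := by
        intro q hq
        rcases isAssociatedPrime_or N'' hq with h | h
        · exact Or.inl h
        · exact Or.inr (by rw [← hquot]; exact h)
      have hN''eq : associatedPrimes R N'' = associatedPrimes R N :=
        LinearEquiv.AssociatedPrimes.eq (Submodule.comapSubtypeEquivOfLe hNle)
      have hNfin : (associatedPrimes R N).Finite := hN
      have : (associatedPrimes R N'').Finite := by rw [hN''eq]; exact hNfin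
      exact Set.Finite.subset (this.union (Set.finite_singleton p)) hsub
    exact hmax N' hfin' (lt_of_le_of_ne hNle (fun hEq => hxN (hEq ▸ hxN')))

end AssocAux

section HomAux

variable {R : Type*} [CommRing R] (a : Ideal R) {N : Type*} [AddCommGroup N] [Module R N]

/-- The annihilator of a homomorphism `φ : R⧸a → N` equals the annihilator of `φ 1`. -/
lemma annihilator_span_hom_eq (φ : (R ⧸ a) →ₗ[R] N) :
    (⊥ : Submodule R ((R ⧸ a) →ₗ[R] N)).colon {φ} = (⊥ : Submodule R N).colon {φ 1} := by
  ext r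
  simp only [Submodule.mem_colon_singleton, Submodule.mem_bot]
  constructor
  · intro h
    have := LinearMap.congr_fun h (1 : R ⧸ a)
    simpa using this
  · intro h
    refine LinearMap.ext fun y => ?_
    obtain ⟨s, rfl⟩ := Ideal.Quotient.mk_surjective y
    have hmk : (Ideal.Quotient.mk a) s = s • (1 : R ⧸ a) := by
      rw [← Ideal.Quotient.algebraMap_eq, Algebra.algebraMap_eq_smul_one]
    show r • φ ((Ideal.Quotient.mk a) s) = 0
    rw [hmk, map_smul, smul_comm, h, smul_zero]

end HomAux

/-- If `N` is `a`-cofinite, then `Ass N = Ass Hom(R/a, N)`; in particular the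
set of associated primes of `N` is finite. -/
theorem associatedPrimes_of_cofinite
    {R : Type} [CommRing R] [IsNoetherianRing R] (a : Ideal R)
    (N : Type) [AddCommGroup N] [Module R N] (h : IsCofinite a N) :
    associatedPrimes R N = associatedPrimes R ((R ⧸ a) →ₗ[R] N) ∧
      (associatedPrimes R N).Finite := by
  have key : associatedPrimes R N = associatedPrimes R ((R ⧸ a) →ₗ[R] N) := by
    ext p
    rw [AssociatedPrimes.mem_iff, isAssociatedPrime_iff, AssociatedPrimes.mem_iff,
      isAssociatedPrime_iff]
    constructor
    · rintro ⟨hprime, x, hx⟩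
      have hps : (⟨p, hprime⟩ : PrimeSpectrum R) ∈ Module.support R N :=
        Module.mem_support_iff_exists_annihilator.mpr ⟨x, fun r hr => by
          show r ∈ p
          rw [hx, Submodule.mem_colon_singleton, Submodule.mem_bot]
          exact (Submodule.mem_annihilator_span_singleton _ _).mp hr⟩
      have ha : (a : Set R) ⊆ (p : Set R) := (PrimeSpectrum.mem_zeroLocus _ _).mp (h.1 hps)
      have hax : ∀ r ∈ a, r • x = 0 := by
        intro r hr
        have : r ∈ p := ha hr
        rw [hx, Submodule.mem_colon_singleton, Submodule.mem_bot] at this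
        exact this
      set φ : (R ⧸ a) →ₗ[R] N :=
        Submodule.liftQ a (LinearMap.toSpanSingleton R N x)
          (fun r hr => by simpa using hax r hr) with hφdef
      refine ⟨hprime, φ, ?_⟩
      have hφ1 : φ 1 = x := by
        have : (1 : R ⧸ a) = Submodule.Quotient.mk (1 : R) := rfl
        rw [this, Submodule.liftQ_apply]
        simp
      rw [annihilator_span_hom_eq, hφ1, ← hx]
    · rintro ⟨hprime, φ, hφ⟩
      exact ⟨hprime, φ 1, by rw [hφ, annihilator_span_hom_eq]⟩
  refine ⟨key, ?_⟩
  rw [key]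
  -- it suffices to show the Hom-module is Noetherian
  have hNoeth : IsNoetherian R ((R ⧸ a) →ₗ[R] N) := by
    have h0 := h.2 0
    set C := ModuleCat.{0} R
    set X : C := ModuleCat.of R (R ⧸ a)
    set Y : C := ModuleCat.of R N
    set F : C ⥤ (ModuleCat.{0} R)ᵒᵖ := ((linearYoneda R C).obj Y).rightOp with hFdef
    -- `F.fromLeftDerivedZero.app X` is an epimorphism
    have hepi2 : Epi (F.map ((projectiveResolution X).π.f 0)) := by
      have hmono : Mono (((linearYoneda R C).obj Y).map ((projectiveResolution X).π.f 0).op) := by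
        rw [ModuleCat.mono_iff_injective]
        intro φ ψ hφψ
        have : (projectiveResolution X).π.f 0 ≫ φ = (projectiveResolution X).π.f 0 ≫ ψ := hφψ
        exact (cancel_epi _).mp this
      exact inferInstanceAs (Epi ((((linearYoneda R C).obj Y).map
        ((projectiveResolution X).π.f 0).op).op))
    have hepi1 : Epi ((projectiveResolution X).fromLeftDerivedZero' F) := by
      have : Epi (HomologicalComplex.pOpcycles _ _ ≫
          (projectiveResolution X).fromLeftDerivedZero' F) := by
        rw [ProjectiveResolution.pOpcycles_comp_fromLeftDerivedZero']
        exact hepi2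
      exact epi_of_epi (HomologicalComplex.pOpcycles _ _) _
    have hepi : Epi (F.fromLeftDerivedZero.app X) := by
      rw [ProjectiveResolution.fromLeftDerivedZero_eq (projectiveResolution X) F]
      exact epi_comp' inferInstance (epi_comp' (@IsIso.epi_of_iso _ _ _ _ _ (Iso.isIso_hom _)) hepi1)
    have hmono : Mono ((F.fromLeftDerivedZero.app X).unop) := unop_mono_of_epi _
    have hinj : Function.Injective ((F.fromLeftDerivedZero.app X).unop) :=
      (ModuleCat.mono_iff_injective _).mp hmono
    have hNE : IsNoetherian R (((Ext R C 0).obj (Opposite.op X)).obj Y) :=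
      isNoetherian_of_isNoetherianRing_of_finite R _
    haveI hNE' : IsNoetherian R ((Opposite.unop ((F.leftDerived 0).obj X)) : ModuleCat.{0} R) :=
      hNE
    exact isNoetherian_of_injective
      ((F.fromLeftDerivedZero.app X).unop.hom ∘ₗ
        (ModuleCat.homLinearEquiv (M := X) (N := Y) (S := R)).symm.toLinearMap :
        ((R ⧸ a) →ₗ[R] N) →ₗ[R] (((Ext R C 0).obj (Opposite.op X)).obj Y))
        (hinj.comp (ModuleCat.homLinearEquiv (M := X) (N := Y) (S := R)).symm.injective)
  exact associatedPrimes_finite_of_isNoetherian
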